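/- arXiv:1507.05087 — 3 statements merged into one kernel-verified Lean document; each statement's English description precedes it below -/
import Mathlib

section
/- For every a > 0 and every real x, the Gaussian scale mixture with exponential mixing density equals the Laplacian density: ∫₀^∞ (2πγ)^(−1/2) · exp(−x²/(2γ)) · (a²/2) · exp(−a²γ/2) dγ = (a/2) · exp(−a·|x|). -/
open MeasureTheory Real

lemma glasser_image {b c : ℝ} (hb : 0 < b) (hc : 0 < c) :
    (fun t => b * t - c / t) '' Set.Ioi (0:ℝ) = Set.univ := by
  ext s
  simp only [Set.mem_image, Set.mem_Ioi, Set.mem_univ, iff_true]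
  set d := Real.sqrt (s ^ 2 + 4 * b * c) with hd
  have hd2 : d ^ 2 = s ^ 2 + 4 * b * c := Real.sq_sqrt (by nlinarith)
  have hds : -s < d := by
    nlinarith [Real.sqrt_nonneg (s ^ 2 + 4 * b * c)]
  have hsd : 0 < s + d := by linarith
  refine ⟨(s + d) / (2 * b), div_pos hsd (by positivity), ?_⟩
  have h2b : (2 * b) ≠ 0 := by positivity
  field_simp
  nlinarith

lemma glasser_deriv {b c : ℝ} (t : ℝ) (ht : t ≠ 0) :
    HasDerivAt (fun t => b * t - c / t) (b + c / t ^ 2) t := by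
  have h1 : HasDerivAt (fun t : ℝ => b * t) b t := by
    simpa using (hasDerivAt_id t).const_mul b
  have h2 : HasDerivAt (fun t : ℝ => c / t) (c * (-(t ^ 2)⁻¹)) t := by
    simpa [div_eq_mul_inv] using (hasDerivAt_inv ht).const_mul c
  have := h1.sub h2
  exact this.congr_deriv (by ring)

lemma glasser_mono {b c : ℝ} (hb : 0 < b) (hc : 0 ≤ c) :
    StrictMonoOn (fun t => b * t - c / t) (Set.Ioi (0:ℝ)) := by
  intro t ht u hu htu
  simp only [Set.mem_Ioi] at ht hu
  have h1 : b * t < b * u := by nlinarith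
  have h2 : c / u ≤ c / t := by gcongr
  simp only
  linarith

lemma glasser (b c : ℝ) (hb : 0 < b) (hc : 0 ≤ c) :
    ∫ t in Set.Ioi (0:ℝ), Real.exp (-(b * t - c / t) ^ 2) = Real.sqrt π / (2 * b) := by
  rcases eq_or_lt_of_le hc with hc0 | hc
  · have : ∀ t : ℝ, -(b * t - c / t) ^ 2 = -(b^2) * t ^ 2 := by
      intro t; rw [← hc0]; ring_nf
    simp_rw [this]
    rw [integral_gaussian_Ioi, Real.sqrt_div pi_nonneg, Real.sqrt_sq hb.le]
    ring
  · set f : ℝ → ℝ := fun t => b * t - c / t with hf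
    have hderiv : ∀ t ∈ Set.Ioi (0:ℝ), HasDerivWithinAt f (b + c / t ^ 2) (Set.Ioi 0) t :=
      fun t ht => (glasser_deriv t (ne_of_gt ht)).hasDerivWithinAt
    have hinj : Set.InjOn f (Set.Ioi 0) := (glasser_mono hb hc.le).injOn
    have key := integral_image_eq_integral_abs_deriv_smul measurableSet_Ioi hderiv hinj
        (fun s => Real.exp (-s ^ 2))
    rw [glasser_image hb hc, Measure.restrict_univ] at key
    have hgauss : ∫ s : ℝ, Real.exp (-s ^ 2) = Real.sqrt π := by
      have := integral_gaussian 1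
      simpa using this
    -- continuity facts
    have hfc : ContinuousOn f (Set.Ioi 0) :=
      (continuousOn_const.mul continuousOn_id).sub
        (continuousOn_const.div continuousOn_id (fun t ht => ne_of_gt ht))
    have hec : ContinuousOn (fun t => Real.exp (-(f t) ^ 2)) (Set.Ioi 0) :=
      Real.continuous_exp.comp_continuousOn (hfc.pow 2).neg
    -- integrability of the full integrand
    have hIntSum : IntegrableOn (fun t => |b + c / t ^ 2| • Real.exp (-(f t) ^ 2)) (Set.Ioi 0) := by
      have hiff := integrableOn_image_iff_integrableOn_abs_deriv_smul measurableSet_Ioi hderiv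
        hinj (fun s => Real.exp (-s ^ 2))
      rw [glasser_image hb hc] at hiff
      refine hiff.mp ?_
      rw [IntegrableOn, Measure.restrict_univ]
      have := integrable_exp_neg_mul_sq (b := 1) one_pos
      simpa using this
    have hI1 : IntegrableOn (fun t => b * Real.exp (-(f t) ^ 2)) (Set.Ioi 0) := by
      apply Integrable.mono' hIntSum
        ((continuousOn_const.mul hec).aestronglyMeasurable measurableSet_Ioi)
      filter_upwards [ae_restrict_mem measurableSet_Ioi] with t ht
      simp only [Set.mem_Ioi] at ht
      have he := Real.exp_pos (-(f t) ^ 2)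
      have h2 : (0:ℝ) < c / t ^ 2 := by positivity
      simp only [Pi.mul_apply]
      rw [Real.norm_eq_abs, smul_eq_mul, abs_of_pos (by positivity : (0:ℝ) < b + c / t ^ 2),
        abs_of_pos (by positivity)]
      nlinarith
    have hI2 : IntegrableOn (fun t => (c / t ^ 2) * Real.exp (-(f t) ^ 2)) (Set.Ioi 0) := by
      apply Integrable.mono' hIntSum
      · exact ((continuousOn_const.div (continuousOn_id.pow 2)
          (fun t ht => pow_ne_zero 2 (ne_of_gt ht))).mul hec).aestronglyMeasurable
          measurableSet_Ioi
      filter_upwards [ae_restrict_mem measurableSet_Ioi] with t ht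
      simp only [Set.mem_Ioi] at ht
      have he := Real.exp_pos (-(f t) ^ 2)
      have h2 : (0:ℝ) < c / t ^ 2 := by positivity
      rw [Real.norm_eq_abs, smul_eq_mul, abs_of_pos (by positivity : (0:ℝ) < b + c / t ^ 2),
        abs_of_pos (by positivity)]
      nlinarith
    have habs : Set.EqOn (fun t => |b + c / t ^ 2| • Real.exp (-(f t) ^ 2))
        (fun t => b * Real.exp (-(f t) ^ 2) + (c / t ^ 2) * Real.exp (-(f t) ^ 2))
        (Set.Ioi 0) := by
      intro t ht
      simp only [Set.mem_Ioi] at ht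
      have h2 : (0:ℝ) < c / t ^ 2 := by positivity
      simp only [smul_eq_mul, abs_of_pos (by positivity : (0:ℝ) < b + c / t ^ 2)]
      ring
    rw [setIntegral_congr_fun measurableSet_Ioi habs, integral_add hI1 hI2,
      integral_const_mul] at key
    -- second substitution: t ↦ c/b/t
    have hinj2 : Set.InjOn (fun t : ℝ => c / b / t) (Set.Ioi 0) := by
      have : StrictAntiOn (fun t : ℝ => c / b / t) (Set.Ioi 0) := by
        intro t ht u hu htu
        simp only [Set.mem_Ioi] at ht hu
        exact div_lt_div_of_pos_left (by positivity) ht htu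
      exact this.injOn
    have hderiv2 : ∀ t ∈ Set.Ioi (0:ℝ),
        HasDerivWithinAt (fun t : ℝ => c / b / t) (-(c / b) / t ^ 2) (Set.Ioi 0) t := by
      intro t ht
      simp only [Set.mem_Ioi] at ht
      have : HasDerivAt (fun t : ℝ => c / b / t) ((c / b) * (-(t ^ 2)⁻¹)) t := by
        simpa [div_eq_mul_inv] using (hasDerivAt_inv (ne_of_gt ht)).const_mul (c / b)
      have h' := this.hasDerivWithinAt (s := Set.Ioi 0)
      exact h'.congr_deriv (by ring)
    have himg2 : (fun t : ℝ => c / b / t) '' Set.Ioi (0:ℝ) = Set.Ioi 0 := by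
      ext y
      simp only [Set.mem_image, Set.mem_Ioi]
      constructor
      · rintro ⟨t, ht, rfl⟩; positivity
      · intro hy
        refine ⟨c / b / y, by positivity, ?_⟩
        field_simp
    have key2 := integral_image_eq_integral_abs_deriv_smul measurableSet_Ioi hderiv2 hinj2
        (fun y => Real.exp (-(b * y - c / y) ^ 2))
    rw [himg2] at key2
    have hpt : Set.EqOn
        (fun t => |(-(c / b) / t ^ 2)| • Real.exp (-(b * (c / b / t) - c / (c / b / t)) ^ 2))
        (fun t => (1 / b) * ((c / t ^ 2) * Real.exp (-(f t) ^ 2))) (Set.Ioi 0) := by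
      intro t ht
      simp only [Set.mem_Ioi] at ht
      have harg : b * (c / b / t) - c / (c / b / t) = -(b * t - c / t) := by
        field_simp
        ring
      simp only [harg, neg_sq, smul_eq_mul, abs_div, abs_neg,
        abs_of_pos (by positivity : (0:ℝ) < c / b),
        abs_of_pos (by positivity : (0:ℝ) < t ^ 2), hf]
      ring
    rw [setIntegral_congr_fun measurableSet_Ioi hpt, integral_const_mul] at key2
    -- combine
    have hJ : ∫ t in Set.Ioi (0:ℝ), Real.exp (-(f t) ^ 2)
        = (1 / b) * ∫ t in Set.Ioi (0:ℝ), (c / t ^ 2) * Real.exp (-(f t) ^ 2) := key2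
    rw [hgauss] at key
    have hbne : b ≠ 0 := ne_of_gt hb
    have : Real.sqrt π = 2 * b * ∫ t in Set.Ioi (0:ℝ), Real.exp (-(f t) ^ 2) := by
      rw [key, hJ]; field_simp; ring
    rw [this, mul_div_cancel_left₀ _ (by positivity : (2 * b) ≠ 0)]

/-- Gaussian scale mixture with exponential mixing density equals the Laplacian density. -/
theorem gaussian_scale_mixture_exponential_eq_laplacian (a : ℝ) (ha : 0 < a) (x : ℝ) :
    ∫ γ in Set.Ioi (0 : ℝ),
      (2 * π * γ) ^ (-(1/2) : ℝ) * Real.exp (-x ^ 2 / (2 * γ)) *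
        (a ^ 2 / 2) * Real.exp (-(a ^ 2) * γ / 2)
      = (a / 2) * Real.exp (-a * |x|) := by
  have hs2 : (0:ℝ) < Real.sqrt 2 := Real.sqrt_pos.mpr (by norm_num)
  have hsp : (0:ℝ) < Real.sqrt π := Real.sqrt_pos.mpr pi_pos
  set b : ℝ := a / Real.sqrt 2 with hbdef
  set c : ℝ := |x| / Real.sqrt 2 with hcdef
  have hb : 0 < b := by positivity
  have hc : 0 ≤ c := by positivity
  have h2 : (Real.sqrt 2) ^ 2 = 2 := Real.sq_sqrt (by norm_num)
  -- substitution γ = t ^ 2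
  have hderiv : ∀ t ∈ Set.Ioi (0:ℝ),
      HasDerivWithinAt (fun t : ℝ => t ^ 2) (2 * t) (Set.Ioi 0) t := by
    intro t ht
    have := hasDerivAt_pow 2 t
    simpa using this.hasDerivWithinAt
  have hinj : Set.InjOn (fun t : ℝ => t ^ 2) (Set.Ioi 0) := by
    intro t ht u hu h
    simp only [Set.mem_Ioi] at ht hu
    have h' : t ^ 2 = u ^ 2 := h
    nlinarith
  have himg : (fun t : ℝ => t ^ 2) '' Set.Ioi 0 = Set.Ioi 0 := by
    ext γ
    simp only [Set.mem_image, Set.mem_Ioi]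
    constructor
    · rintro ⟨t, ht, rfl⟩; positivity
    · intro hγ
      exact ⟨Real.sqrt γ, Real.sqrt_pos.mpr hγ, Real.sq_sqrt hγ.le⟩
  have key := integral_image_eq_integral_abs_deriv_smul measurableSet_Ioi hderiv hinj
    (fun γ => (2 * π * γ) ^ (-(1/2) : ℝ) * Real.exp (-x ^ 2 / (2 * γ)) *
        (a ^ 2 / 2) * Real.exp (-(a ^ 2) * γ / 2))
  rw [himg] at key
  rw [key]
  have hpt : Set.EqOn
      (fun t : ℝ => |2 * t| • ((2 * π * t ^ 2) ^ (-(1/2) : ℝ) *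
        Real.exp (-x ^ 2 / (2 * t ^ 2)) * (a ^ 2 / 2) *
        Real.exp (-(a ^ 2) * t ^ 2 / 2)))
      (fun t : ℝ => (a ^ 2 / Real.sqrt (2 * π) * Real.exp (-(a * |x|))) *
        Real.exp (-(b * t - c / t) ^ 2)) (Set.Ioi 0) := by
    intro t ht
    simp only [Set.mem_Ioi] at ht
    have htne : t ≠ 0 := ne_of_gt ht
    have h1 : (2 * π * t ^ 2 : ℝ) ^ (-(1/2) : ℝ) = (Real.sqrt (2 * π) * t)⁻¹ := by
      rw [Real.rpow_neg (by positivity), ← Real.sqrt_eq_rpow,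
        Real.sqrt_mul (by positivity) (t ^ 2), Real.sqrt_sq ht.le]
    have hexpand : (b * t - c / t) ^ 2 = b ^ 2 * t ^ 2 - 2 * (b * c) + c ^ 2 / t ^ 2 := by
      field_simp; ring
    have hb2 : b ^ 2 = a ^ 2 / 2 := by
      rw [hbdef, div_pow, h2]
    have hc2 : c ^ 2 = x ^ 2 / t ^ 2 / 2 * t ^ 2 := by
      rw [hcdef, div_pow, h2, sq_abs]; field_simp
    have hbc : b * c = a * |x| / 2 := by
      have hss : Real.sqrt 2 * Real.sqrt 2 = 2 := Real.mul_self_sqrt (by norm_num)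
      rw [hbdef, hcdef, div_mul_div_comm, hss]
    have hexp : Real.exp (-x ^ 2 / (2 * t ^ 2)) * Real.exp (-(a ^ 2) * t ^ 2 / 2)
        = Real.exp (-(a * |x|)) * Real.exp (-(b * t - c / t) ^ 2) := by
      rw [← Real.exp_add, ← Real.exp_add, hexpand, hb2, hc2, hbc]
      congr 1
      field_simp
      ring
    have hcoef : (2 * t) * ((Real.sqrt (2 * π) * t)⁻¹) * (a ^ 2 / 2)
        = a ^ 2 / Real.sqrt (2 * π) := by
      have : Real.sqrt (2 * π) ≠ 0 := by positivity
      field_simp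
    simp only [smul_eq_mul, abs_of_pos (by positivity : (0:ℝ) < 2 * t), h1]
    calc (2 * t) * ((Real.sqrt (2 * π) * t)⁻¹ *
          Real.exp (-x ^ 2 / (2 * t ^ 2)) * (a ^ 2 / 2) *
          Real.exp (-(a ^ 2) * t ^ 2 / 2))
        = ((2 * t) * ((Real.sqrt (2 * π) * t)⁻¹) * (a ^ 2 / 2)) *
          (Real.exp (-x ^ 2 / (2 * t ^ 2)) * Real.exp (-(a ^ 2) * t ^ 2 / 2)) := by ring
      _ = (a ^ 2 / Real.sqrt (2 * π)) *
          (Real.exp (-(a * |x|)) * Real.exp (-(b * t - c / t) ^ 2)) := by rw [hcoef, hexp]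
      _ = (a ^ 2 / Real.sqrt (2 * π) * Real.exp (-(a * |x|))) *
          Real.exp (-(b * t - c / t) ^ 2) := by ring
  rw [setIntegral_congr_fun measurableSet_Ioi hpt, integral_const_mul,
    glasser b c hb hc]
  have h2π : Real.sqrt (2 * π) = Real.sqrt 2 * Real.sqrt π :=
    Real.sqrt_mul (by norm_num) π
  rw [h2π, hbdef, neg_mul]
  have hane : a ≠ 0 := ne_of_gt ha
  field_simp
end

section
/- For every ε > 0 and every real x, mixing a Laplacian density over its scale with an inverse gamma mixing density yields a generalized double Pareto (GT(1,1,ε)) density: ∫₀^∞ (1/(2γ)) · exp(−|x|/γ) · (ε^ε/Γ(ε)) · γ^(−ε−1) · exp(−ε/γ) dγ = (1/2) · (1 + |x|/ε)^(−(ε+1)). -/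
open MeasureTheory Real

/-- A Laplacian scale mixture with inverse gamma mixing density yields the
generalized double Pareto (GT(1,1,ε)) density. -/
theorem laplacian_scale_mixture_invGamma_eq_GDP (ε : ℝ) (hε : 0 < ε) (x : ℝ) :
    ∫ γ in Set.Ioi (0 : ℝ),
      (1 / (2 * γ)) * Real.exp (-|x| / γ) *
        ((ε ^ ε / Real.Gamma ε) * γ ^ (-ε - 1) * Real.exp (-ε / γ))
      = (1 / 2) * (1 + |x| / ε) ^ (-(ε + 1)) := by
  have hx : (0:ℝ) ≤ |x| := abs_nonneg x
  set a := |x| + ε with ha_def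
  have ha : 0 < a := by positivity
  have hG : 0 < Real.Gamma ε := Real.Gamma_pos_of_pos hε
  have key : ∫ γ in Set.Ioi (0:ℝ),
      (1 / (2 * γ)) * Real.exp (-|x| / γ) *
        ((ε ^ ε / Real.Gamma ε) * γ ^ (-ε - 1) * Real.exp (-ε / γ))
      = ∫ t in Set.Ioi (0:ℝ),
        (ε ^ ε / (2 * Real.Gamma ε)) * (t ^ ((ε + 1) - 1) * Real.exp (-(a * t))) := by
    rw [← MeasureTheory.integral_comp_rpow_Ioi
      (fun t => (ε ^ ε / (2 * Real.Gamma ε)) * (t ^ ((ε + 1) - 1) * Real.exp (-(a * t))))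
      (p := -1) (by norm_num)]
    refine setIntegral_congr_fun measurableSet_Ioi fun γ hγ => ?_
    have hγ0 : (0:ℝ) < γ := hγ
    have hγ0' : γ ≠ 0 := hγ0.ne'
    simp only [smul_eq_mul, abs_neg, abs_one, Real.rpow_neg_one]
    have h1 : (γ⁻¹ : ℝ) ^ ((ε + 1) - 1) = γ ^ (-ε) := by
      rw [add_sub_cancel_right, ← Real.rpow_neg_one γ, ← Real.rpow_mul hγ0.le]
      norm_num
    have h2 : Real.exp (-(a * γ⁻¹)) = Real.exp (-|x| / γ) * Real.exp (-ε / γ) := by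
      rw [← Real.exp_add]
      congr 1
      field_simp [ha_def]
      ring
    rw [h1, h2]
    have h3 : γ ^ ((-1:ℝ) - 1) * γ ^ (-ε) = γ ^ (-ε - 2) := by
      rw [← Real.rpow_add hγ0]; ring_nf
    have h4 : (1 / (2 * γ)) * γ ^ (-ε - 1) = (1/2) * γ ^ (-ε - 2) := by
      have : γ ^ (-ε - 2) = γ ^ (-ε - 1) * γ⁻¹ := by
        rw [← Real.rpow_neg_one γ, ← Real.rpow_add hγ0]; ring_nf
      rw [this]
      field_simp
    calc (1 / (2 * γ)) * Real.exp (-|x| / γ) *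
          ((ε ^ ε / Real.Gamma ε) * γ ^ (-ε - 1) * Real.exp (-ε / γ))
        = ((1 / (2 * γ)) * γ ^ (-ε - 1)) * (ε ^ ε / Real.Gamma ε) *
          (Real.exp (-|x| / γ) * Real.exp (-ε / γ)) := by ring
      _ = ((1/2) * γ ^ (-ε - 2)) * (ε ^ ε / Real.Gamma ε) *
          (Real.exp (-|x| / γ) * Real.exp (-ε / γ)) := by rw [h4]
      _ = γ ^ ((-1:ℝ) - 1) * γ ^ (-ε) * ((ε ^ ε / (2 * Real.Gamma ε)) *
          (Real.exp (-|x| / γ) * Real.exp (-ε / γ))) := by rw [h3]; ring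
      _ = _ := by ring
  rw [key, MeasureTheory.integral_const_mul,
    Real.integral_rpow_mul_exp_neg_mul_Ioi (by linarith) ha,
    Real.Gamma_add_one hε.ne']
  have hrhs : (1 + |x| / ε) = a / ε := by field_simp [ha_def]; ring
  rw [hrhs, Real.div_rpow ha.le hε.le, Real.rpow_neg ha.le, Real.rpow_neg hε.le,
    one_div a, Real.inv_rpow ha.le, Real.rpow_add_one hε.ne']
  have haε : a ^ (ε + 1) ≠ 0 := by positivity
  field_simp
end

section
/- For every p > 0, q > 0, and σ > 0, the normalization integral of the generalized t density is finite and given by ∫_ℝ (1 + |x|^p/(q·σ^p))^(−(q + 1/p)) dx = (2·σ·q^(1/p)/p) · B(1/p, q), where B denotes the Beta function. -/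
open MeasureTheory Real

/-- B(a,b) = Γ(a)Γ(b)/Γ(a+b), the Beta function. -/
noncomputable def Beta (a b : ℝ) : ℝ := Real.Gamma a * Real.Gamma b / Real.Gamma (a + b)

open Set

lemma beta_complex_eq (a b : ℝ) (ha : 0 < a) (hb : 0 < b) :
    Complex.betaIntegral a b = ((∫ t in (0:ℝ)..1, t ^ (a-1) * (1-t) ^ (b-1) : ℝ) : ℂ) := by
  rw [Complex.betaIntegral, ← intervalIntegral.integral_ofReal]
  refine intervalIntegral.integral_congr fun t ht => ?_
  rw [uIcc_of_le zero_le_one] at ht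
  rw [show ((a:ℂ)-1) = ((a-1:ℝ):ℂ) by push_cast; ring,
      show ((b:ℂ)-1) = ((b-1:ℝ):ℂ) by push_cast; ring,
      show (1 - (t:ℂ)) = ((1-t:ℝ):ℂ) by push_cast; ring,
      ← Complex.ofReal_cpow ht.1, ← Complex.ofReal_cpow (by linarith [ht.2]),
      ← Complex.ofReal_mul]

lemma beta_integral_eq (a b : ℝ) (ha : 0 < a) (hb : 0 < b) :
    ∫ t in Ioo (0:ℝ) 1, t ^ (a-1) * (1-t) ^ (b-1) = Beta a b := by
  have h := Complex.Gamma_mul_Gamma_eq_betaIntegral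
    (s := (a:ℂ)) (t := (b:ℂ)) (by simpa using ha) (by simpa using hb)
  rw [beta_complex_eq a b ha hb] at h
  have hab : Real.Gamma (a + b) ≠ 0 := (Real.Gamma_pos_of_pos (by linarith)).ne'
  have h2 : Real.Gamma a * Real.Gamma b
      = Real.Gamma (a + b) * ∫ t in (0:ℝ)..1, t ^ (a-1) * (1-t) ^ (b-1) := by
    have := congrArg Complex.re h
    simpa [Complex.Gamma_ofReal, ← Complex.ofReal_mul, ← Complex.ofReal_add] using this
  rw [← integral_Ioc_eq_integral_Ioo, ← intervalIntegral.integral_of_le zero_le_one]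
  rw [Beta, h2]
  field_simp

lemma beta_integrable (a b : ℝ) (ha : 0 < a) (hb : 0 < b) :
    IntegrableOn (fun t => t ^ (a-1) * (1-t) ^ (b-1)) (Ioo (0:ℝ) 1) := by
  have h := Complex.betaIntegral_convergent (u := (a:ℂ)) (v := (b:ℂ))
    (by simpa using ha) (by simpa using hb)
  rw [intervalIntegrable_iff_integrableOn_Ioo_of_le zero_le_one] at h
  have hre := h.re
  refine IntegrableOn.congr_fun hre (fun t ht => ?_) measurableSet_Ioo
  simp only [RCLike.re_to_complex]
  rw [show ((a:ℂ)-1) = ((a-1:ℝ):ℂ) by push_cast; ring,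
      show ((b:ℂ)-1) = ((b-1:ℝ):ℂ) by push_cast; ring,
      show (1 - (t:ℂ)) = ((1-t:ℝ):ℂ) by push_cast; ring,
      ← Complex.ofReal_cpow ht.1.le, ← Complex.ofReal_cpow (by linarith [ht.2])]
  rw [← Complex.ofReal_mul, Complex.ofReal_re]

lemma integrable_of_even {f : ℝ → ℝ} (heven : ∀ x, f (-x) = f x)
    (hf : IntegrableOn f (Ioi (0:ℝ))) : Integrable f := by
  have int_Iic : IntegrableOn f (Iic (0:ℝ)) := by
    rw [← Measure.map_neg_eq_self (volume : Measure ℝ)]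
    have m : MeasurableEmbedding fun x : ℝ => -x := (Homeomorph.neg ℝ).measurableEmbedding
    rw [m.integrableOn_map_iff]
    simp_rw [Function.comp_def, heven, neg_preimage, neg_Iic, neg_zero]
    exact (integrableOn_Ici_iff_integrableOn_Ioi).mpr hf
  rw [← integrableOn_univ, ← Iic_union_Ioi (a := (0:ℝ))]
  exact int_Iic.union hf

/-- The normalization integral of the generalized t density is finite and equals
(2σq^(1/p)/p)·B(1/p, q). -/
theorem GT_normalization (p q σ : ℝ) (hp : 0 < p) (hq : 0 < q) (hσ : 0 < σ) :
    Integrable (fun x : ℝ => (1 + |x| ^ p / (q * σ ^ p)) ^ (-(q + 1/p))) ∧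
    (∫ x : ℝ, (1 + |x| ^ p / (q * σ ^ p)) ^ (-(q + 1/p)))
      = (2 * σ * q ^ (1/p) / p) * Beta (1/p) q := by
  set a : ℝ := 1/p with ha_def
  have ha : 0 < a := by positivity
  set c : ℝ := σ * q ^ a with hc_def
  have hc : 0 < c := by positivity
  set F : ℝ → ℝ := fun y => (1 + |y| ^ p / (q * σ ^ p)) ^ (-(q + a)) with hF_def
  set f : ℝ → ℝ := fun t => c * (t / (1 - t)) ^ a with hf_def
  set f' : ℝ → ℝ := fun t => c * (a * (t / (1 - t)) ^ (a - 1) * (1 / (1 - t) ^ 2)) with hf'_def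
  -- derivative
  have hderiv : ∀ t ∈ Ioo (0:ℝ) 1, HasDerivWithinAt f (f' t) (Ioo (0:ℝ) 1) t := by
    intro t ht
    have h1t : (0:ℝ) < 1 - t := by linarith [ht.2]
    have hratio : (0:ℝ) < t / (1 - t) := div_pos ht.1 h1t
    have hdq : HasDerivAt (fun t : ℝ => t / (1 - t)) (1 / (1 - t) ^ 2) t := by
      have := (hasDerivAt_id t).div ((hasDerivAt_id t).const_sub 1) h1t.ne'
      refine this.congr_deriv ?_
      simp only [id]; ring
    have h3 : HasDerivAt f (f' t) t := by
      have h4 := (hdq.rpow_const (p := a) (Or.inl hratio.ne')).const_mul c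
      refine h4.congr_deriv ?_
      simp only [hf'_def]
      ring
    exact h3.hasDerivWithinAt
  -- injectivity
  have hinj : InjOn f (Ioo (0:ℝ) 1) := by
    have hmono : StrictMonoOn f (Ioo (0:ℝ) 1) := by
      intro t1 h1 t2 h2 hlt
      have h1t1 : (0:ℝ) < 1 - t1 := by linarith [h1.2]
      have h1t2 : (0:ℝ) < 1 - t2 := by linarith [h2.2]
      have hr : t1 / (1 - t1) < t2 / (1 - t2) := by
        rw [div_lt_div_iff₀ h1t1 h1t2]; nlinarith
      exact mul_lt_mul_of_pos_left
        (Real.rpow_lt_rpow (div_pos h1.1 h1t1).le hr ha) hc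
    exact hmono.injOn
  -- image
  have himage : f '' Ioo (0:ℝ) 1 = Ioi (0:ℝ) := by
    apply Set.eq_of_subset_of_subset
    · rintro x ⟨t, ht, rfl⟩
      have h1t : (0:ℝ) < 1 - t := by linarith [ht.2]
      exact mul_pos hc (Real.rpow_pos_of_pos (div_pos ht.1 h1t) a)
    · intro x hx
      have hx0 : (0:ℝ) < x := hx
      set u : ℝ := (x / c) ^ p with hu_def
      have hu : 0 < u := Real.rpow_pos_of_pos (div_pos hx0 hc) p
      refine ⟨u / (1 + u), ⟨div_pos hu (by linarith), ?_⟩, ?_⟩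
      · rw [div_lt_one (by linarith)]; linarith
      · have h1 : 1 - u / (1 + u) = 1 / (1 + u) := by field_simp; ring
        have h2 : u / (1 + u) / (1 - u / (1 + u)) = u := by
          rw [h1]; field_simp
        simp only [hf_def, h2]
        rw [hu_def]
        rw [← Real.rpow_mul (div_pos hx0 hc).le, mul_one_div_cancel hp.ne',
          Real.rpow_one]
        field_simp
  -- pointwise identity
  have hpoint : ∀ t ∈ Ioo (0:ℝ) 1,
      |f' t| • F (f t) = (c * a) * (t ^ (a - 1) * (1 - t) ^ (q - 1)) := by
    intro t ht
    have h1t : (0:ℝ) < 1 - t := by linarith [ht.2]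
    have hratio : (0:ℝ) < t / (1 - t) := div_pos ht.1 h1t
    have hft : 0 < f t := mul_pos hc (Real.rpow_pos_of_pos hratio a)
    have hfp : (f t) ^ p / (q * σ ^ p) = t / (1 - t) := by
      rw [hf_def]
      simp only
      rw [Real.mul_rpow hc.le (Real.rpow_nonneg hratio.le a),
        ← Real.rpow_mul hratio.le, one_div_mul_cancel hp.ne', Real.rpow_one,
        hc_def, Real.mul_rpow hσ.le (Real.rpow_nonneg hq.le a),
        ← Real.rpow_mul hq.le, one_div_mul_cancel hp.ne', Real.rpow_one]
      field_simp
    have hFft : F (f t) = (1 - t) ^ (q + a) := by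
      rw [hF_def]
      simp only
      rw [abs_of_pos hft, hfp]
      have h2 : 1 + t / (1 - t) = (1 - t)⁻¹ := by field_simp; ring
      rw [h2, ← Real.rpow_neg_one (1 - t), ← Real.rpow_mul h1t.le]
      norm_num
    have habs : |f' t| = c * (a * (t / (1 - t)) ^ (a - 1) * (1 / (1 - t) ^ 2)) := by
      rw [hf'_def]
      exact abs_of_pos (by positivity)
    rw [smul_eq_mul, habs, hFft, Real.div_rpow ht.1.le h1t.le]
    have e1 : ((1 - t) ^ (2:ℕ) : ℝ) = (1 - t) ^ ((2:ℝ)) := by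
      rw [← Real.rpow_natCast]; norm_num
    have e2 : (1 - t) ^ (q + a) = (1 - t) ^ (a - 1) * (1 - t) ^ ((2:ℝ)) * (1 - t) ^ (q - 1) := by
      rw [← Real.rpow_add h1t, ← Real.rpow_add h1t]; ring_nf
    have hne1 : (1 - t) ^ (a - 1) ≠ 0 := (Real.rpow_pos_of_pos h1t _).ne'
    have hne2 : (1 - t) ^ ((2:ℝ)) ≠ 0 := (Real.rpow_pos_of_pos h1t _).ne'
    rw [e1, e2]
    field_simp
  -- change of variables
  have hcv : ∫ x in Ioi (0:ℝ), F x = (c * a) * Beta a q := by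
    rw [← himage, integral_image_eq_integral_abs_deriv_smul measurableSet_Ioo hderiv hinj F,
      setIntegral_congr_fun measurableSet_Ioo hpoint, MeasureTheory.integral_const_mul,
      beta_integral_eq a q ha hq]
  have hint : IntegrableOn F (Ioi (0:ℝ)) := by
    rw [← himage, integrableOn_image_iff_integrableOn_abs_deriv_smul measurableSet_Ioo
      hderiv hinj]
    refine IntegrableOn.congr_fun ?_ (fun t ht => (hpoint t ht).symm) measurableSet_Ioo
    exact (beta_integrable a q ha hq).const_mul (c * a)
  have heven : ∀ x, F (-x) = F x := fun x => by simp [hF_def, abs_neg]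
  have hInt : Integrable F := integrable_of_even heven hint
  refine ⟨hInt, ?_⟩
  calc ∫ x, F x = ∫ x, F |x| := by
        congr 1; ext x; simp [hF_def, abs_abs]
    _ = 2 * ∫ x in Ioi (0:ℝ), F x := integral_comp_abs
    _ = 2 * ((c * a) * Beta a q) := by rw [hcv]
    _ = (2 * σ * q ^ a / p) * Beta a q := by
        rw [hc_def, ha_def]; field_simp
end
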